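/- Let n be a positive integer and let K_p, K_d, K_o ∈ ℝ^{n×n} be symmetric positive definite matrices. Let I, H̃, ζ : ℝ → ℝ^n be differentiable and satisfy the closed-loop system İ = H̃, Ḣ̃ = ζ − K_d H̃ − K_p I, ζ̇ = −ζ − K_o⁻¹ H̃. Then the function V(t) = ½ I(t)ᵀK_p I(t) + ½‖H̃(t)‖² + ½ ζ(t)ᵀK_o ζ(t) is differentiable with V′(t) = −H̃(t)ᵀK_d H̃(t) − ζ(t)ᵀK_o ζ(t) ≤ 0 for all t; in particular V is nonincreasing. -/

import Mathlib

open Matrix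

private lemma hasDerivAt_dot {n : ℕ} {f g : ℝ → Fin n → ℝ} {f' g' : Fin n → ℝ} {t : ℝ}
    (hf : HasDerivAt f f' t) (hg : HasDerivAt g g' t) :
    HasDerivAt (fun s => f s ⬝ᵥ g s) (f' ⬝ᵥ g t + f t ⬝ᵥ g') t := by
  simp only [dotProduct]
  rw [← Finset.sum_add_distrib]
  exact HasDerivAt.fun_sum fun i _ =>
    ((hasDerivAt_pi.1 hf i).mul (hasDerivAt_pi.1 hg i))

private lemma hasDerivAt_mulVec {n : ℕ} (A : Matrix (Fin n) (Fin n) ℝ)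
    {f : ℝ → Fin n → ℝ} {f' : Fin n → ℝ} {t : ℝ} (hf : HasDerivAt f f' t) :
    HasDerivAt (fun s => A *ᵥ f s) (A *ᵥ f') t := by
  rw [hasDerivAt_pi]
  intro i
  simp only [mulVec, dotProduct]
  exact HasDerivAt.fun_sum fun j _ => (hasDerivAt_pi.1 hf j).const_mul (A i j)

private lemma dot_symm {n : ℕ} {A : Matrix (Fin n) (Fin n) ℝ} (hA : A.IsHermitian)
    (x y : Fin n → ℝ) : x ⬝ᵥ (A *ᵥ y) = y ⬝ᵥ (A *ᵥ x) := by
  have hAt : Aᵀ = A := by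
    have := hA.eq
    rwa [conjTranspose_eq_transpose_of_trivial] at this
  rw [Matrix.dotProduct_mulVec, ← hAt, Matrix.vecMul_transpose, dotProduct_comm, hAt]

/-- Lyapunov computation of Lemma 2: Along the closed-loop system
`İ = H̃`, `Ḣ̃ = ζ - K_d H̃ - K_p I`, `ζ̇ = -ζ - K_o⁻¹ H̃`, the function
`V(t) = ½ I(t)ᵀ K_p I(t) + ½‖H̃(t)‖² + ½ ζ(t)ᵀ K_o ζ(t)` is differentiable with
`V'(t) = -H̃(t)ᵀ K_d H̃(t) - ζ(t)ᵀ K_o ζ(t) ≤ 0`; in particular `V` is nonincreasing.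
(Here `‖v‖² = v ⬝ᵥ v` is the squared Euclidean norm.) -/
theorem lyapunov_derivative_momentum_jerk_with_integral
    (n : ℕ) (hn : 0 < n) (Kp Kd Ko : Matrix (Fin n) (Fin n) ℝ)
    (hKp : Kp.PosDef) (hKd : Kd.PosDef) (hKo : Ko.PosDef)
    (I H Z : ℝ → (Fin n → ℝ))
    (hI : ∀ t, HasDerivAt I (H t) t)
    (hH : ∀ t, HasDerivAt H (Z t - Kd *ᵥ H t - Kp *ᵥ I t) t)
    (hZ : ∀ t, HasDerivAt Z (-(Z t) - Ko⁻¹ *ᵥ H t) t) :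
    (∀ t, HasDerivAt
        (fun s => (1/2) * (I s ⬝ᵥ (Kp *ᵥ I s)) + (1/2) * (H s ⬝ᵥ H s)
          + (1/2) * (Z s ⬝ᵥ (Ko *ᵥ Z s)))
        (-(H t ⬝ᵥ (Kd *ᵥ H t)) - Z t ⬝ᵥ (Ko *ᵥ Z t)) t)
    ∧ (∀ t, -(H t ⬝ᵥ (Kd *ᵥ H t)) - Z t ⬝ᵥ (Ko *ᵥ Z t) ≤ 0)
    ∧ Antitone (fun s => (1/2) * (I s ⬝ᵥ (Kp *ᵥ I s)) + (1/2) * (H s ⬝ᵥ H s)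
          + (1/2) * (Z s ⬝ᵥ (Ko *ᵥ Z s))) := by
  have hderiv : ∀ t, HasDerivAt
      (fun s => (1/2) * (I s ⬝ᵥ (Kp *ᵥ I s)) + (1/2) * (H s ⬝ᵥ H s)
        + (1/2) * (Z s ⬝ᵥ (Ko *ᵥ Z s)))
      (-(H t ⬝ᵥ (Kd *ᵥ H t)) - Z t ⬝ᵥ (Ko *ᵥ Z t)) t := by
    intro t
    have h1 := (hasDerivAt_dot (hI t) (hasDerivAt_mulVec Kp (hI t))).const_mul (1/2 : ℝ)
    have h2 := (hasDerivAt_dot (hH t) (hH t)).const_mul (1/2 : ℝ)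
    have h3 := (hasDerivAt_dot (hZ t) (hasDerivAt_mulVec Ko (hZ t))).const_mul (1/2 : ℝ)
    have := (h1.fun_add h2).fun_add h3
    convert this using 1
    · rfl
    · rfl
    have hsymKp := dot_symm hKp.isHermitian (I t) (H t)
    have hsymKo := dot_symm hKo.isHermitian (Z t) (Ko⁻¹ *ᵥ H t)
    have hKoinv : Ko *ᵥ (Ko⁻¹ *ᵥ H t) = H t := by
      rw [mulVec_mulVec, Matrix.mul_nonsing_inv _
        ((Matrix.isUnit_iff_isUnit_det Ko).1 hKo.isUnit), one_mulVec]
    simp only [Matrix.mulVec_sub, Matrix.mulVec_neg, dotProduct_sub, sub_dotProduct,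
      dotProduct_neg, neg_dotProduct, hKoinv]
    rw [hsymKp] at *
    rw [dot_symm hKo.isHermitian (Ko⁻¹ *ᵥ H t) (Z t)] at *
    rw [hsymKo]
    have hcomm : H t ⬝ᵥ Z t = Z t ⬝ᵥ H t := dotProduct_comm _ _
    have hc2 : (Kd *ᵥ H t) ⬝ᵥ H t = H t ⬝ᵥ (Kd *ᵥ H t) := dotProduct_comm _ _
    have hc3 : (Kp *ᵥ I t) ⬝ᵥ H t = H t ⬝ᵥ (Kp *ᵥ I t) := dotProduct_comm _ _
    have hc4 : (Z t) ⬝ᵥ Ko *ᵥ Z t = (Ko *ᵥ Z t) ⬝ᵥ Z t := dotProduct_comm _ _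
    ring_nf
    rw [hKoinv]
    rw [hc2, hc3, hcomm]
    ring
  have hnonpos : ∀ t, -(H t ⬝ᵥ (Kd *ᵥ H t)) - Z t ⬝ᵥ (Ko *ᵥ Z t) ≤ 0 := by
    intro t
    have h1 : 0 ≤ H t ⬝ᵥ (Kd *ᵥ H t) := hKd.posSemidef.dotProduct_mulVec_nonneg (H t)
    have h2 : 0 ≤ Z t ⬝ᵥ (Ko *ᵥ Z t) := hKo.posSemidef.dotProduct_mulVec_nonneg (Z t)
    linarith
  refine ⟨hderiv, hnonpos, ?_⟩
  apply antitone_of_deriv_nonpos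
  · exact fun t => ((hderiv t).differentiableAt)
  · intro t
    rw [(hderiv t).deriv]
    exact hnonpos t
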